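/- Let D be a real symmetric n×n matrix of negative type whose kernel is nontrivial, and suppose D has some diagonal entry 0 and some off-diagonal entry positive in the first 2×2 block (specifically D_{11}=D_{22}=0 and D_{12}>0, as holds for distance matrices). Then every vector α in the kernel of D satisfies ⟨α, 1⟩ = 0. -/

import Mathlib

open Matrix

/-- For a symmetric matrix of negative type with `D₁₁ = D₂₂ = 0` and `D₁₂ > 0`
(as holds for distance matrices) with nontrivial kernel, every kernel vector is
orthogonal to the all-ones vector. -/
theorem neg_type_kernel_orthogonal_ones {n : ℕ} (hn : 2 ≤ n)
    (D : Matrix (Fin n) (Fin n) ℝ) (hsymm : D.IsSymm)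
    (hneg : ∀ β : Fin n → ℝ, β ⬝ᵥ 1 = 0 → D.mulVec β ⬝ᵥ β ≤ 0)
    (h00 : D ⟨0, by omega⟩ ⟨0, by omega⟩ = 0)
    (h11 : D ⟨1, by omega⟩ ⟨1, by omega⟩ = 0)
    (h01 : 0 < D ⟨0, by omega⟩ ⟨1, by omega⟩)
    (hker : ∃ β : Fin n → ℝ, β ≠ 0 ∧ D.mulVec β = 0) :
    ∀ α : Fin n → ℝ, D.mulVec α = 0 → α ⬝ᵥ 1 = 0 := by
  intro α hα
  by_contra hs
  set i0 : Fin n := ⟨0, by omega⟩ with hi0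
  set i1 : Fin n := ⟨1, by omega⟩ with hi1
  have hne : i0 ≠ i1 := by simp [hi0, hi1, Fin.ext_iff]
  set s : ℝ := α ⬝ᵥ 1 with hsdef
  set x : Fin n → ℝ := Pi.single i0 1 + Pi.single i1 1 with hx
  have hx1 : x ⬝ᵥ (1 : Fin n → ℝ) = 2 := by
    simp [hx, add_dotProduct, single_dotProduct]
    norm_num
  set β : Fin n → ℝ := x - (2 / s) • α with hβ
  have hβ1 : β ⬝ᵥ (1 : Fin n → ℝ) = 0 := by
    simp [hβ, sub_dotProduct, smul_dotProduct, hx1, ← hsdef]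
    field_simp
    norm_num
  have hDβ : D.mulVec β = D.mulVec x := by
    simp [hβ, mulVec_sub, mulVec_smul, hα]
  -- cross term vanishes
  have hcross : D.mulVec x ⬝ᵥ α = 0 := by
    have : D.mulVec x ⬝ᵥ α = x ⬝ᵥ D.mulVec α := by
      rw [dotProduct_mulVec, ← mulVec_transpose, hsymm.eq, dotProduct_comm,
        dotProduct_mulVec, ← mulVec_transpose, hsymm.eq, dotProduct_comm]
    rw [this, hα, dotProduct_zero]
  have hQx : D.mulVec x ⬝ᵥ x = 2 * D i0 i1 := by
    have h10 : D i1 i0 = D i0 i1 := (hsymm.apply i0 i1)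
    simp [hx, mulVec_add, mulVec_single, add_dotProduct, dotProduct_add,
      dotProduct_single, h00, h11, ← hi0, ← hi1, h10]
    ring
  have key := hneg β hβ1
  rw [hDβ] at key
  have : D.mulVec x ⬝ᵥ β = 2 * D i0 i1 := by
    simp [hβ, dotProduct_sub, dotProduct_smul, hcross, hQx]
  rw [this] at key
  linarith
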